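/- Let Q ⊆ ℝⁿ be a nonempty compact convex set with ‖x − y‖ ≤ D for all x, y ∈ Q, where D > 0, and let g : Q → ℝⁿ be a continuous monotone operator. Let z_0 ∈ Q, L_0 > 0, and suppose the sequences (z_k), (w_k) ⊆ Q and (L_k) ⊆ (0,∞) satisfy the UMP recursions: w_k minimizes x ↦ ⟨g(z_k), x − z_k⟩ + (L_k/2)‖z_k − x‖² over Q; z_{k+1} minimizes x ↦ ⟨g(w_k), x − w_k⟩ + (L_k/2)‖z_k − x‖² over Q; L_{k+1} = L_k + max{0, (2⟨g(w_k), w_k − z_{k+1}⟩ − L_k‖z_k − z_{k+1}‖²)/(D² + ‖z_k − z_{k+1}‖²)}. Then for every k ≥ 0, the averaged point ŵ = (1/(k+1)) Σ_{i=0}^{k} w_i satisfies Gap(ŵ) = max_{y ∈ Q} ⟨g(y), ŵ − y⟩ ≤ 2D² L_{k+1}/(k+1). -/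

import Mathlib

open scoped RealInnerProductSpace
open Finset

private lemma nonneg_of_small_t (B C : ℝ) (hC : 0 ≤ C)
    (h : ∀ t : ℝ, 0 < t → t ≤ 1 → 0 ≤ t * B + t ^ 2 * C) : 0 ≤ B := by
  by_contra hB
  push_neg at hB
  set t := min 1 (-B / (2 * C + 1)) with ht
  have h1 : 0 < -B / (2 * C + 1) := div_pos (by linarith) (by linarith)
  have ht0 : 0 < t := lt_min one_pos h1
  have ht1 : t ≤ 1 := min_le_left _ _
  have h0 := h t ht0 ht1
  have h2 : 0 ≤ B + t * C := by nlinarith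
  have h3 : t * C ≤ (-B / (2 * C + 1)) * C :=
    mul_le_mul_of_nonneg_right (min_le_right _ _) hC
  have h4 : (-B / (2 * C + 1)) * C < -B := by
    rw [div_mul_eq_mul_div, div_lt_iff₀ (by linarith)]
    nlinarith
  linarith

private lemma three_point {n : ℕ} {Q : Set (EuclideanSpace ℝ (Fin n))} (hQ : Convex ℝ Q)
    (gw wv zi p : EuclideanSpace ℝ (Fin n)) (Lk : ℝ) (hL : 0 < Lk) (hp : p ∈ Q)
    (hmin : ∀ x ∈ Q, ⟪gw, p - wv⟫ + Lk / 2 * ‖zi - p‖ ^ 2 ≤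
      ⟪gw, x - wv⟫ + Lk / 2 * ‖zi - x‖ ^ 2)
    {y : EuclideanSpace ℝ (Fin n)} (hy : y ∈ Q) :
    ⟪gw, p - y⟫ ≤ Lk / 2 * (‖zi - y‖ ^ 2 - ‖zi - p‖ ^ 2 - ‖p - y‖ ^ 2) := by
  have key : 0 ≤ ⟪gw, y - p⟫ - Lk * ⟪zi - p, y - p⟫ := by
    apply nonneg_of_small_t _ (Lk / 2 * ‖y - p‖ ^ 2) (by positivity)
    intro t ht0 ht1
    have hxQ : p + t • (y - p) ∈ Q := by
      have := hQ hp hy (by linarith : (0:ℝ) ≤ 1 - t) (le_of_lt ht0) (by ring)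
      convert this using 1
      module
    have h0 := hmin _ hxQ
    have e1 : ⟪gw, p + t • (y - p) - wv⟫ = ⟪gw, p - wv⟫ + t * ⟪gw, y - p⟫ := by
      rw [show p + t • (y - p) - wv = (p - wv) + t • (y - p) by abel]
      rw [inner_add_right, real_inner_smul_right]
    have e2 : ‖zi - (p + t • (y - p))‖ ^ 2 =
        ‖zi - p‖ ^ 2 - 2 * (t * ⟪zi - p, y - p⟫) + t ^ 2 * ‖y - p‖ ^ 2 := by
      rw [show zi - (p + t • (y - p)) = (zi - p) - t • (y - p) by abel]
      rw [norm_sub_sq_real, real_inner_smul_right, norm_smul, Real.norm_eq_abs,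
        mul_pow, sq_abs]
    rw [e1, e2] at h0
    nlinarith [h0]
  have hid : 2 * ⟪zi - p, p - y⟫ = ‖zi - y‖ ^ 2 - ‖zi - p‖ ^ 2 - ‖p - y‖ ^ 2 := by
    have := norm_add_sq_real (zi - p) (p - y)
    rw [show zi - p + (p - y) = zi - y by abel] at this
    linarith
  have h5 : ⟪zi - p, y - p⟫ = - ⟪zi - p, p - y⟫ := by
    rw [show y - p = -(p - y) by abel, inner_neg_right]
  have h6 : ⟪gw, p - y⟫ = - ⟪gw, y - p⟫ := by
    rw [show p - y = -(y - p) by abel, inner_neg_right]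
  rw [h5] at key
  nlinarith [key]

/-- gap bound `Gap(ŵ) ≤ 2D²L_{k+1}/(k+1)` for the averaged iterate of the
UMP method applied to a continuous monotone operator on a compact convex set. -/
theorem ump_gap_bound {n : ℕ} (Q : Set (EuclideanSpace ℝ (Fin n)))
    (hQne : Q.Nonempty) (hQc : IsCompact Q) (hQ : Convex ℝ Q)
    (D : ℝ) (hD : 0 < D) (hQD : ∀ x ∈ Q, ∀ y ∈ Q, ‖x - y‖ ≤ D)
    (g : EuclideanSpace ℝ (Fin n) → EuclideanSpace ℝ (Fin n))
    (hg : ContinuousOn g Q)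
    (hmono : ∀ x ∈ Q, ∀ y ∈ Q, 0 ≤ ⟪g x - g y, x - y⟫)
    (z w : ℕ → EuclideanSpace ℝ (Fin n)) (L : ℕ → ℝ)
    (hzQ : ∀ k, z k ∈ Q) (hwQ : ∀ k, w k ∈ Q) (hLpos : ∀ k, 0 < L k)
    (hw : ∀ k, ∀ x ∈ Q, ⟪g (z k), w k - z k⟫ + L k / 2 * ‖z k - w k‖ ^ 2 ≤
      ⟪g (z k), x - z k⟫ + L k / 2 * ‖z k - x‖ ^ 2)
    (hz : ∀ k, ∀ x ∈ Q, ⟪g (w k), z (k + 1) - w k⟫ + L k / 2 * ‖z k - z (k + 1)‖ ^ 2 ≤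
      ⟪g (w k), x - w k⟫ + L k / 2 * ‖z k - x‖ ^ 2)
    (hLrec : ∀ k, L (k + 1) = L k + max 0
      ((2 * ⟪g (w k), w k - z (k + 1)⟫ - L k * ‖z k - z (k + 1)‖ ^ 2) /
        (D ^ 2 + ‖z k - z (k + 1)‖ ^ 2))) :
    ∀ k : ℕ,
      (⨆ y : Q, ⟪g (y : EuclideanSpace ℝ (Fin n)),
        (1 / (k + 1 : ℝ)) • (∑ i ∈ range (k + 1), w i) - (y : EuclideanSpace ℝ (Fin n))⟫) ≤
      2 * D ^ 2 * L (k + 1) / (k + 1 : ℝ) := by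
  -- L is nondecreasing
  have hstep : ∀ i : ℕ, L i ≤ L (i + 1) := by
    intro i
    rw [hLrec i]
    exact le_add_of_nonneg_right (le_max_left _ _)
  have hLmono : Monotone L := monotone_nat_of_le_succ hstep
  -- per-step bound
  have hper : ∀ (i : ℕ) (y : EuclideanSpace ℝ (Fin n)), y ∈ Q →
      ⟪g (w i), w i - y⟫ ≤ 3 / 2 * D ^ 2 * (L (i + 1) - L i)
        + L i / 2 * ‖z i - y‖ ^ 2 - L (i + 1) / 2 * ‖z (i + 1) - y‖ ^ 2 := by
    intro i y hy
    set A := ⟪g (w i), w i - z (i + 1)⟫ with hA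
    set r2 := ‖z i - z (i + 1)‖ ^ 2 with hr2
    set δ := L (i + 1) - L i with hδ
    have hδ0 : 0 ≤ δ := by simp [hδ]; linarith [hstep i]
    have hδmax : (2 * A - L i * r2) / (D ^ 2 + r2) ≤ δ := by
      rw [hδ, hLrec i]
      simp only [add_sub_cancel_left]
      exact le_max_right _ _
    have hden : 0 < D ^ 2 + r2 := by positivity
    have hAbound : 2 * A - L i * r2 ≤ δ * (D ^ 2 + r2) := by
      rw [← div_le_iff₀ hden]; exact hδmax
    have hr2D : r2 ≤ D ^ 2 := by
      have := hQD _ (hzQ i) _ (hzQ (i + 1))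
      rw [hr2]
      exact pow_le_pow_left₀ (norm_nonneg _) this 2
    have htp : ⟪g (w i), z (i + 1) - y⟫ ≤
        L i / 2 * (‖z i - y‖ ^ 2 - r2 - ‖z (i + 1) - y‖ ^ 2) :=
      three_point hQ (g (w i)) (w i) (z i) (z (i + 1)) (L i) (hLpos i)
        (hzQ (i + 1)) (hz i) hy
    have hsplit : ⟪g (w i), w i - y⟫ = A + ⟪g (w i), z (i + 1) - y⟫ := by
      rw [hA, ← inner_add_right]
      congr 1
      abel
    have hs2 : ‖z (i + 1) - y‖ ^ 2 ≤ D ^ 2 := by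
      have := hQD _ (hzQ (i + 1)) _ hy
      exact pow_le_pow_left₀ (norm_nonneg _) this 2
    rw [hsplit]
    nlinarith [hAbound, htp, hδ0, hr2D, hs2,
      mul_le_mul_of_nonneg_left hr2D hδ0, mul_le_mul_of_nonneg_left hs2 hδ0]
  intro k
  have hkpos : (0 : ℝ) < (k : ℝ) + 1 := by positivity
  have : Nonempty Q := hQne.to_subtype
  apply ciSup_le
  rintro ⟨y, hy⟩
  simp only
  -- sum bound
  have hsum : ∑ i ∈ range (k + 1), ⟪g (w i), w i - y⟫ ≤ 2 * D ^ 2 * L (k + 1) := by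
    have h1 : ∑ i ∈ range (k + 1), ⟪g (w i), w i - y⟫ ≤
        ∑ i ∈ range (k + 1),
          ((L i / 2 * ‖z i - y‖ ^ 2 - 3 / 2 * D ^ 2 * L i) -
            (L (i + 1) / 2 * ‖z (i + 1) - y‖ ^ 2 - 3 / 2 * D ^ 2 * L (i + 1))) := by
      apply Finset.sum_le_sum
      intro i _
      have := hper i y hy
      linarith
    rw [Finset.sum_range_sub' (fun i => L i / 2 * ‖z i - y‖ ^ 2 - 3 / 2 * D ^ 2 * L i)] at h1
    have hz0 : ‖z 0 - y‖ ^ 2 ≤ D ^ 2 := by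
      have := hQD _ (hzQ 0) _ hy
      exact pow_le_pow_left₀ (norm_nonneg _) this 2
    have hL0 : 0 < L 0 := hLpos 0
    have hLk : L 0 ≤ L (k + 1) := hLmono (Nat.zero_le _)
    have hn : 0 ≤ ‖z (k + 1) - y‖ ^ 2 := by positivity
    have hLk1 : 0 < L (k + 1) := hLpos (k + 1)
    nlinarith [mul_le_mul_of_nonneg_left hz0 (le_of_lt hL0),
      mul_nonneg (le_of_lt hLk1) hn]
  -- monotonicity
  have hmon : ∑ i ∈ range (k + 1), ⟪g y, w i - y⟫ ≤
      ∑ i ∈ range (k + 1), ⟪g (w i), w i - y⟫ := by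
    apply Finset.sum_le_sum
    intro i _
    have := hmono (w i) (hwQ i) y hy
    rw [inner_sub_left] at this
    linarith
  -- rewrite the averaged inner product
  have havg : ((k : ℝ) + 1) * ⟪g y, (1 / (k + 1 : ℝ)) • (∑ i ∈ range (k + 1), w i) - y⟫ =
      ∑ i ∈ range (k + 1), ⟪g y, w i - y⟫ := by
    rw [inner_sub_right, real_inner_smul_right, inner_sum]
    simp only [inner_sub_right, Finset.sum_sub_distrib, Finset.sum_const, card_range,
      nsmul_eq_mul]
    push_cast
    field_simp
  rw [le_div_iff₀ hkpos, mul_comm, havg]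
  exact le_trans hmon hsum
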